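/- Pointwise truncated Taylor estimate: let q > 2. There exists a constant C > 0, depending only on q, such that for every δ ∈ (0,1] and every t ∈ ℝ, | |1+t|^q − 1 − qt − (q(q−1)/2) t² | ≤ C ( δ t² + δ^{2−q} |t|^q ). -/

import Mathlib

open Real Set


private lemma sqrpow_eq (x r : ℝ) : ((x:ℝ)^2) ^ r = |x| ^ (2*r) := by
  rw [← sq_abs x, ← Real.rpow_natCast |x| 2, ← Real.rpow_mul (abs_nonneg x)]
  norm_num

private lemma rpow_subadd {a b p : ℝ} (ha : 0 ≤ a) (hb : 0 ≤ b) (hp : 0 ≤ p) (hp1 : p ≤ 1) :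
    (a + b) ^ p ≤ a ^ p + b ^ p := by
  have h := NNReal.rpow_add_le_add_rpow (⟨a, ha⟩) (⟨b, hb⟩) hp hp1
  have h2 := NNReal.coe_le_coe.2 h
  exact Real.rpow_add_le_add_rpow ha hb hp hp1

private lemma hasDeriv0 (q : ℝ) (hq : 2 < q) (t : ℝ) :
    HasDerivAt (fun t : ℝ => ((1+t)^2) ^ (q/2)) (q * (1+t) * ((1+t)^2) ^ (q/2 - 1)) t := by
  have h1 : HasDerivAt (fun t : ℝ => (1+t)^2) (2*(1+t)) t := by
    simpa using ((hasDerivAt_id t).const_add 1).fun_pow 2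
  have h2 := h1.rpow_const (p := q/2) (Or.inr (by linarith))
  convert h2 using 1
  ring


private lemma hasDeriv1 (q : ℝ) (hq : 2 < q) (t : ℝ) :
    HasDerivAt (fun t : ℝ => q * (1+t) * ((1+t)^2) ^ (q/2 - 1))
      (q * (q-1) * ((1+t)^2) ^ (q/2 - 1)) t := by
  rcases eq_or_ne (1+t) 0 with h0 | h0
  · have ht : t = -1 := by linarith
    subst ht
    have hz : ((1+(-1):ℝ)^2) = 0 := by norm_num
    rw [hz, Real.zero_rpow (by intro h; rw [sub_eq_zero] at h; linarith [h]), mul_zero]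
    rw [hasDerivAt_iff_tendsto_slope]
    have hcont : ContinuousAt (fun s : ℝ => q * ((1+s)^2) ^ (q/2 - 1)) (-1) := by
      have hc1 : ContinuousAt (fun x : ℝ => x ^ (q/2 - 1)) ((1+(-1):ℝ)^2) := by
        rw [hz]; exact Real.continuousAt_rpow_const 0 _ (Or.inr (by linarith))
      have hc2 : ContinuousAt (fun s : ℝ => (1+s)^2) (-1) := by fun_prop
      exact continuousAt_const.mul (ContinuousAt.comp (g := fun x : ℝ => x ^ (q/2-1)) hc1 hc2)
    have hval : q * ((1+(-1):ℝ)^2) ^ (q/2 - 1) = 0 := by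
      rw [hz, Real.zero_rpow (by intro h; rw [sub_eq_zero] at h; linarith [h]), mul_zero]
    have htends : Filter.Tendsto (fun s : ℝ => q * ((1+s)^2) ^ (q/2 - 1)) (nhdsWithin (-1) {(-1 : ℝ)}ᶜ) (nhds 0) := by
      rw [← hval]
      exact (hcont.tendsto).mono_left nhdsWithin_le_nhds
    refine htends.congr' ?_
    filter_upwards [self_mem_nhdsWithin] with s hs
    have hs1 : s - (-1) ≠ 0 := sub_ne_zero.2 hs
    have : (1 : ℝ) + s ≠ 0 := by intro h; apply hs1; linarith
    rw [slope_def_field]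
    show q * ((1+s)^2) ^ (q/2 - 1) =
      (q * (1+s) * ((1+s)^2) ^ (q/2 - 1) - q * (1+(-1:ℝ)) * ((1+(-1:ℝ))^2) ^ (q/2 - 1)) / (s - (-1))
    rw [show q * (1+(-1:ℝ)) * ((1+(-1:ℝ))^2) ^ (q/2 - 1) = 0 by norm_num, sub_zero,
      eq_div_iff hs1]
    ring
  · have hsq : ((1+t)^2) ≠ 0 := pow_ne_zero _ h0
    have h1 : HasDerivAt (fun t : ℝ => (1+t)^2) (2*(1+t)) t := by
      simpa using ((hasDerivAt_id t).const_add 1).fun_pow 2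
    have h2 := h1.rpow_const (p := q/2 - 1) (Or.inl hsq)
    have h3 : HasDerivAt (fun t : ℝ => q * (1+t)) q t := by
      simpa using ((hasDerivAt_id t).const_add 1).const_mul q
    have h4 := h3.fun_mul h2
    refine h4.congr_deriv ?_
    have key : ((1+t)^2) ^ (q/2 - 1) = ((1+t)^2) ^ (q/2 - 2) * ((1+t)^2) := by
      rw [← Real.rpow_add_one hsq]; ring_nf
    rw [key]
    rw [show q/2 - 1 - 1 = q/2 - 2 by ring] at h4 ⊢
    ring

private lemma abs_rpow_sub_one_le' {α x : ℝ} (hα : 0 < α) (hx0 : 0 ≤ x) (hx2 : x ≤ 2) :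
    |x ^ α - 1| ≤ (α * 2 ^ α + 1) * |x - 1| ^ (min α 1) := by
  have h2α : (1:ℝ) ≤ 2 ^ α := Real.one_le_rpow one_le_two hα.le
  rcases le_or_gt 1 α with hα1 | hα1
  · -- α ≥ 1, min = 1
    rw [min_eq_right hα1, Real.rpow_one]
    rcases le_or_gt 1 x with hx1 | hx1
    · -- x ≥ 1 : chord
      have hone : (1:ℝ) ≤ x ^ α := Real.one_le_rpow hx1 hα.le
      have hc := (convexOn_rpow hα1).2 (show (1:ℝ) ∈ Ici (0:ℝ) by norm_num)
        (show (2:ℝ) ∈ Ici (0:ℝ) by norm_num)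
        (show (0:ℝ) ≤ 2 - x by linarith) (show (0:ℝ) ≤ x - 1 by linarith)
        (show (2 - x) + (x - 1) = 1 by ring)
      simp only [smul_eq_mul] at hc
      rw [show (2 - x) * 1 + (x - 1) * 2 = x by ring, Real.one_rpow] at hc
      rw [abs_of_nonneg (by linarith), abs_of_nonneg (by linarith)]
      nlinarith
    · -- x ≤ 1 : Bernoulli
      have hb := one_add_mul_self_le_rpow_one_add (s := x - 1) (by linarith) hα1
      rw [show (1:ℝ) + (x - 1) = x by ring] at hb
      have hle : x ^ α ≤ 1 := Real.rpow_le_one hx0 hx1.le hα.le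
      rw [abs_of_nonpos (by linarith), abs_of_nonpos (by linarith)]
      nlinarith
  · -- α < 1, min = α
    rw [min_eq_left hα1.le]
    rcases le_or_gt 1 x with hx1 | hx1
    · have hsub := rpow_subadd (a := 1) (b := x - 1) (by norm_num) (by linarith) hα.le hα1.le
      rw [show (1:ℝ) + (x - 1) = x by ring, Real.one_rpow] at hsub
      have hone : (1:ℝ) ≤ x ^ α := Real.one_le_rpow hx1 hα.le
      have hnn : (0:ℝ) ≤ (x - 1) ^ α := Real.rpow_nonneg (by linarith) _
      rw [abs_of_nonneg (by linarith), abs_of_nonneg (by linarith)]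
      nlinarith [mul_nonneg (show (0:ℝ) ≤ α * 2 ^ α by positivity) hnn]
    · have hsub := rpow_subadd (a := x) (b := 1 - x) hx0 (by linarith) hα.le hα1.le
      rw [show x + (1 - x) = (1:ℝ) by ring, Real.one_rpow] at hsub
      have hle : x ^ α ≤ 1 := Real.rpow_le_one hx0 hx1.le hα.le
      have hnn : (0:ℝ) ≤ (1 - x) ^ α := Real.rpow_nonneg (by linarith) _
      rw [abs_of_nonpos (by linarith), abs_of_nonpos (by linarith), show -(x-1) = 1 - x by ring]
      nlinarith [mul_nonneg (show (0:ℝ) ≤ α * 2 ^ α by positivity) hnn]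

private lemma small_bound' (q : ℝ) (hq : 2 < q) (t : ℝ) (ht : |t| ≤ 1) :
    |((1+t)^2) ^ (q/2) - 1 - q*t - q*(q-1)/2*t^2| ≤
      q*(q-1)*((q-2)*2^(q-2)+1) * |t| ^ (min (q-2) 1) * t^2 := by
  have hβ0 : 0 < min (q-2) 1 := lt_min (by linarith) one_pos
  have hβ1 : min (q-2) 1 ≤ 1 := min_le_right _ _
  have hβqm2 : min (q-2) 1 = min (q-2) 1 := rfl
  set β := min (q-2) 1 with hβdef
  have hC1pos : (0:ℝ) < (q-2)*2^(q-2)+1 := by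
    have := Real.rpow_pos_of_pos (show (0:ℝ) < 2 by norm_num) (q-2)
    nlinarith
  set M := q*(q-1)*((q-2)*2^(q-2)+1)*|t|^β with hM
  have htβ : (0:ℝ) ≤ |t|^β := Real.rpow_nonneg (abs_nonneg t) β
  have hMnn : 0 ≤ M := by
    rw [hM]; have h1 : (0:ℝ) < q := by linarith
    have h2 : (0:ℝ) < q - 1 := by linarith
    positivity
  -- second derivative bound on uIcc 0 t
  have hbound : ∀ s ∈ uIcc (0:ℝ) t,
      ‖q*(q-1)*((1+s)^2)^(q/2-1) - q*(q-1)‖ ≤ M := by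
    intro s hs
    have hs_abs : |s| ≤ |t| := by
      rw [abs_le]
      rcases mem_uIcc.1 hs with ⟨h1, h2⟩ | ⟨h1, h2⟩ <;>
        constructor <;> nlinarith [le_abs_self t, neg_abs_le t]
    have hid : ((1+s)^2)^(q/2-1) = |1+s|^(q-2) := by
      rw [sqrpow_eq, show 2*(q/2-1) = q-2 by ring]
    have h12 : |1+s| ≤ 2 := by
      calc |1+s| ≤ |(1:ℝ)| + |s| := abs_add_le 1 s
        _ ≤ 2 := by rw [abs_one]; linarith
    have hkey := abs_rpow_sub_one_le' (show (0:ℝ) < q-2 by linarith) (abs_nonneg (1+s)) h12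
    have hbase : |(|1+s|) - 1| ≤ |s| := by
      have := abs_abs_sub_abs_le_abs_sub (1+s) 1
      simpa using this
    have h5 : |(|1+s|) - 1|^β ≤ |t|^β := by
      apply Real.rpow_le_rpow (abs_nonneg _) _ hβ0.le
      exact le_trans hbase hs_abs
    have hq1 : (0:ℝ) < q*(q-1) := by nlinarith
    calc ‖q*(q-1)*((1+s)^2)^(q/2-1) - q*(q-1)‖
        = q*(q-1) * |((1+s)^2)^(q/2-1) - 1| := by
          rw [Real.norm_eq_abs, show q*(q-1)*((1+s)^2)^(q/2-1) - q*(q-1)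
            = q*(q-1)*(((1+s)^2)^(q/2-1) - 1) by ring, abs_mul, abs_of_pos hq1]
      _ ≤ q*(q-1) * (((q-2)*2^(q-2)+1) * |(|1+s|) - 1|^β) := by
          rw [hid]; exact mul_le_mul_of_nonneg_left hkey hq1.le
      _ ≤ M := by
          rw [hM]
          have := mul_le_mul_of_nonneg_left h5 hC1pos.le
          nlinarith
  -- first MVT : bound on F'
  have hF'0 : q*(1+(0:ℝ))*((1+(0:ℝ))^2)^(q/2-1) - q - q*(q-1)*0 = 0 := by
    norm_num
  have hF'bound : ∀ s ∈ uIcc (0:ℝ) t,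
      ‖q*(1+s)*((1+s)^2)^(q/2-1) - q - q*(q-1)*s‖ ≤ M * |t| := by
    intro s hs
    have := (convex_uIcc (0:ℝ) t).norm_image_sub_le_of_norm_hasDerivWithin_le
      (f := fun s : ℝ => q*(1+s)*((1+s)^2)^(q/2-1) - q - q*(q-1)*s)
      (f' := fun s : ℝ => q*(q-1)*((1+s)^2)^(q/2-1) - q*(q-1))
      (fun x _ => by
        have h3 : HasDerivAt (fun s : ℝ => q*(q-1)*s) (q*(q-1)) x := by
          simpa using (hasDerivAt_id x).const_mul (q*(q-1))
        exact ((((hasDeriv1 q hq x).sub_const q).sub h3)).hasDerivWithinAt)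
      hbound (left_mem_uIcc) hs
    beta_reduce at this
    rw [hF'0, sub_zero] at this
    calc ‖q*(1+s)*((1+s)^2)^(q/2-1) - q - q*(q-1)*s‖ ≤ M * ‖s - 0‖ := this
      _ ≤ M * |t| := by
        rw [sub_zero, Real.norm_eq_abs]
        apply mul_le_mul_of_nonneg_left _ hMnn
        rw [abs_le]
        rcases mem_uIcc.1 hs with ⟨h1, h2⟩ | ⟨h1, h2⟩ <;>
          constructor <;> nlinarith [le_abs_self t, neg_abs_le t]
  -- second MVT : bound on F
  have hF0 : ((1+(0:ℝ))^2)^(q/2) - 1 - q*0 - q*(q-1)/2*0^2 = 0 := by norm_num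
  have hfinal := (convex_uIcc (0:ℝ) t).norm_image_sub_le_of_norm_hasDerivWithin_le
    (f := fun s : ℝ => ((1+s)^2)^(q/2) - 1 - q*s - q*(q-1)/2*s^2)
    (f' := fun s : ℝ => q*(1+s)*((1+s)^2)^(q/2-1) - q - q*(q-1)*s)
    (fun x _ => by
      have h1 : HasDerivAt (fun s : ℝ => q*s) q x := by
        simpa using (hasDerivAt_id x).const_mul q
      have h2 : HasDerivAt (fun s : ℝ => q*(q-1)/2*s^2) (q*(q-1)*x) x := by
        have := (hasDerivAt_pow 2 x).const_mul (q*(q-1)/2)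
        exact this.congr_deriv (by simp; ring)
      exact ((((hasDeriv0 q hq x).sub_const 1).sub h1).sub h2).hasDerivWithinAt)
    hF'bound (left_mem_uIcc) (right_mem_uIcc)
  beta_reduce at hfinal
  rw [hF0, sub_zero, sub_zero, Real.norm_eq_abs] at hfinal
  calc |((1+t)^2) ^ (q/2) - 1 - q*t - q*(q-1)/2*t^2| ≤ M * |t| * |t| := hfinal
    _ = q*(q-1)*((q-2)*2^(q-2)+1) * |t|^β * t^2 := by
        rw [hM, mul_assoc, abs_mul_abs_self]; ring

private lemma combine' {c C X Y : ℝ} (hc : 0 ≤ c) (hC : c ≤ C) (hX : 0 ≤ X) (hY : 0 ≤ Y) :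
    c * Y ≤ C * (X + Y) := by nlinarith

theorem pointwise_truncated_taylor (q : ℝ) (hq : 2 < q) :
    ∃ C : ℝ, 0 < C ∧ ∀ δ : ℝ, 0 < δ → δ ≤ 1 → ∀ t : ℝ,
      |(|1 + t| ^ q) - 1 - q * t - q * (q - 1) / 2 * t ^ 2| ≤
        C * (δ * t ^ 2 + δ ^ (2 - q) * |t| ^ q) := by
  have h2q : (0:ℝ) < 2 ^ q := Real.rpow_pos_of_pos two_pos q
  have h2qm2 : (0:ℝ) < 2 ^ (q-2) := Real.rpow_pos_of_pos two_pos (q-2)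
  set D := q*(q-1)*((q-2)*2^(q-2)+1) with hD
  set E := 2^q + 1 + q + q*(q-1)/2 with hE
  have hDpos : 0 < D := by
    rw [hD]
    exact mul_pos (mul_pos (by linarith) (by linarith))
      (by nlinarith [mul_pos (show (0:ℝ) < q-2 by linarith) h2qm2])
  have hEpos : 0 < E := by rw [hE]; nlinarith
  refine ⟨D + E, by linarith, fun δ hδ0 hδ1 t => ?_⟩
  have hδq : 1 ≤ δ^(2-q) :=
    Real.one_le_rpow_of_pos_of_le_one_of_nonpos hδ0 hδ1 (by linarith)
  have htqnn : (0:ℝ) ≤ |t|^q := Real.rpow_nonneg (abs_nonneg t) q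
  have hterm1 : (0:ℝ) ≤ δ * t^2 := by positivity
  have hterm2 : |t|^q ≤ δ^(2-q) * |t|^q := le_mul_of_one_le_left htqnn hδq
  have hterm2nn : (0:ℝ) ≤ δ^(2-q) * |t|^q := htqnn.trans hterm2
  have hident : |1+t|^q = ((1+t)^2)^(q/2) := by
    rw [sqrpow_eq (1+t) (q/2), show 2*(q/2) = q by ring]
  rcases le_or_gt |t| 1 with ht1 | ht1
  · -- |t| ≤ 1
    have hsb := small_bound' q hq t ht1
    rcases le_or_gt q 3 with hq3 | hq3
    · -- 2 < q ≤ 3 : exponent min = q - 2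
      rw [min_eq_left (by linarith)] at hsb
      have hident2 : |t|^(q-2) * t^2 = |t|^q := by
        rcases eq_or_ne t 0 with rfl | ht0
        · simp [Real.zero_rpow (ne_of_gt (show (0:ℝ) < q by linarith)),
            Real.zero_rpow (ne_of_gt (show (0:ℝ) < q - 2 by linarith))]
        · have habs : (0:ℝ) < |t| := abs_pos.2 ht0
          rw [← sq_abs t, ← Real.rpow_two, ← Real.rpow_add habs,
            show q - 2 + 2 = q by ring]
      calc |(|1+t|^q) - 1 - q*t - q*(q-1)/2*t^2| ≤ D * |t|^(q-2) * t^2 := by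
            rw [hident]; exact hsb
        _ = D * |t|^q := by rw [mul_assoc, hident2]
        _ ≤ D * (δ^(2-q) * |t|^q) := mul_le_mul_of_nonneg_left hterm2 hDpos.le
        _ ≤ (D+E) * (δ*t^2 + δ^(2-q)*|t|^q) := by
            have := combine' (mul_nonneg hDpos.le hterm2nn |> fun _ => hDpos.le) (le_add_of_nonneg_right hEpos.le) hterm1 hterm2nn
            exact combine' hDpos.le (le_add_of_nonneg_right hEpos.le) hterm1 hterm2nn
    · -- q > 3 : exponent min = 1
      rw [min_eq_right (by linarith), Real.rpow_one] at hsb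
      rcases le_or_gt |t| δ with htδ | htδ
      · calc |(|1+t|^q) - 1 - q*t - q*(q-1)/2*t^2| ≤ D * |t| * t^2 := by
              rw [hident]; exact hsb
          _ ≤ D * (δ*t^2) := by
              rw [mul_assoc]
              exact mul_le_mul_of_nonneg_left
                (mul_le_mul_of_nonneg_right htδ (sq_nonneg t)) hDpos.le
          _ ≤ (D+E) * (δ^(2-q)*|t|^q + δ*t^2) := by
              exact combine' hDpos.le (le_add_of_nonneg_right hEpos.le) hterm2nn hterm1
          _ = (D+E) * (δ*t^2 + δ^(2-q)*|t|^q) := by ring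
      · have habs : (0:ℝ) < |t| := lt_trans hδ0 htδ
        have h2 : t^2 = |t|^(2-q) * |t|^q := by
          rw [← Real.rpow_add habs, show (2-q)+q = (2:ℝ) by ring, Real.rpow_two, sq_abs]
        have h3 : |t|^(2-q) ≤ δ^(2-q) :=
          Real.rpow_le_rpow_of_nonpos hδ0 htδ.le (by linarith)
        have h4 : t^2 ≤ δ^(2-q) * |t|^q := by
          rw [h2]; exact mul_le_mul_of_nonneg_right h3 htqnn
        calc |(|1+t|^q) - 1 - q*t - q*(q-1)/2*t^2| ≤ D * |t| * t^2 := by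
              rw [hident]; exact hsb
          _ ≤ D * t^2 := by
              rw [mul_assoc]
              nth_rewrite 2 [show t^2 = 1 * t^2 by ring]
              exact mul_le_mul_of_nonneg_left
                (mul_le_mul_of_nonneg_right ht1 (sq_nonneg t)) hDpos.le
          _ ≤ D * (δ^(2-q) * |t|^q) := mul_le_mul_of_nonneg_left h4 hDpos.le
          _ ≤ (D+E) * (δ*t^2 + δ^(2-q)*|t|^q) :=
              combine' hDpos.le (le_add_of_nonneg_right hEpos.le) hterm1 hterm2nn
  · -- |t| > 1
    have hA0 : (0:ℝ) ≤ |1+t|^q := Real.rpow_nonneg (abs_nonneg _) q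
    have hA : |1+t|^q ≤ 2^q * |t|^q := by
      have h1 : |1+t| ≤ 2*|t| := by
        calc |1+t| ≤ |(1:ℝ)| + |t| := abs_add_le 1 t
          _ ≤ 2*|t| := by rw [abs_one]; linarith
      calc |1+t|^q ≤ (2*|t|)^q := Real.rpow_le_rpow (abs_nonneg _) h1 (by linarith)
        _ = 2^q * |t|^q := Real.mul_rpow (by norm_num) (abs_nonneg t)
    have h1q : 1 ≤ |t|^q := Real.one_le_rpow ht1.le (by linarith)
    have htq : |t| ≤ |t|^q := by
      nth_rewrite 1 [← Real.rpow_one |t|]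
      exact Real.rpow_le_rpow_of_exponent_le ht1.le (by linarith)
    have ht2 : t^2 ≤ |t|^q := by
      rw [← sq_abs t, ← Real.rpow_two]
      exact Real.rpow_le_rpow_of_exponent_le ht1.le (by linarith)
    have hq0 : (0:ℝ) ≤ q := by linarith
    have ha : q*t ≤ q*|t| := mul_le_mul_of_nonneg_left (le_abs_self t) hq0
    have hb : -(q*|t|) ≤ q*t := by
      have := mul_le_mul_of_nonneg_left (neg_abs_le t) hq0
      linarith
    have hc : q*|t| ≤ q*(|t|^q) := mul_le_mul_of_nonneg_left htq hq0
    have hhalf : (0:ℝ) ≤ q*(q-1)/2 := by nlinarith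
    have hd : q*(q-1)/2*t^2 ≤ q*(q-1)/2*(|t|^q) := mul_le_mul_of_nonneg_left ht2 hhalf
    have he : (0:ℝ) ≤ q*(q-1)/2*t^2 := mul_nonneg hhalf (sq_nonneg t)
    have hf : (0:ℝ) ≤ q*(q-1)/2*(|t|^q) := mul_nonneg hhalf htqnn
    have hP : (0:ℝ) ≤ 2^q*(|t|^q) := mul_nonneg h2q.le htqnn
    have hsum : 2^q*(|t|^q) + 1*(|t|^q) + q*(|t|^q) + q*(q-1)/2*(|t|^q) = E*|t|^q := by
      rw [hE]; ring
    have key : |(|1+t|^q) - 1 - q*t - q*(q-1)/2*t^2| ≤ E * |t|^q := by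
      rw [abs_le]
      constructor
      · rw [← hsum]; linarith
      · rw [← hsum]; linarith
    calc |(|1+t|^q) - 1 - q*t - q*(q-1)/2*t^2| ≤ E * |t|^q := key
      _ ≤ E * (δ^(2-q) * |t|^q) := mul_le_mul_of_nonneg_left hterm2 hEpos.le
      _ ≤ (D+E) * (δ*t^2 + δ^(2-q)*|t|^q) :=
          combine' hEpos.le (le_add_of_nonneg_left hDpos.le) hterm1 hterm2nn
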